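/- For all α ∈ (0, 1/2], the derivative of U(t)/W(t) at any t∈(0,π/2) equals (sin((2-α)t)/sin t) times the derivative of V(t)/W(t) at t, where U(t) = 2sin(2(1-α)t) − 2(1-α)sin(2t), V(t) = (1+α)sin((1-α)t) − (1-α)sin((1+α)t), W(t) = (3-α)sin((1-α)t) − (1-α)sin((3-α)t), assuming W(t) ≠ 0. -/

import Mathlib

open Real

open Real
lemma key (a x y : ℝ) :
    sin x * ((4*(1-a)*(cos (2*(x-y)) - cos (2*x))) * ((3-a)*sin (x-y) - (1-a)*sin (3*x-y))
      - (2*sin (2*(x-y)) - 2*(1-a)*sin (2*x)) * ((3-a)*(1-a)*cos (x-y) - (1-a)*(3-a)*cos (3*x-y)))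
    = sin (2*x-y) * (((1+a)*(1-a)*cos (x-y) - (1-a)*(1+a)*cos (x+y)) * ((3-a)*sin (x-y) - (1-a)*sin (3*x-y))
      - ((1+a)*sin (x-y) - (1-a)*sin (x+y)) * ((3-a)*(1-a)*cos (x-y) - (1-a)*(3-a)*cos (3*x-y))) := by
  rw [show (3:ℝ)*x - y = 2*x + (x - y) by ring, show (2:ℝ)*x - y = x + (x - y) by ring]
  simp only [sin_add, cos_add, sin_sub, cos_sub, sin_two_mul, cos_two_mul]
  linear_combination ((16:ℝ)*Real.cos x^2*Real.cos y + (-64:ℝ)*Real.cos x^2*Real.cos y*a + (64:ℝ)*Real.cos x^2*Real.cos y*a^2 + (-16:ℝ)*Real.cos x^2*Real.cos y*a^3 + (-16:ℝ)*Real.cos x^2*Real.cos y^3 + (64:ℝ)*Real.cos x^2*Real.cos y^3*a + (-64:ℝ)*Real.cos x^2*Real.cos y^3*a^2 + (16:ℝ)*Real.cos x^2*Real.cos y^3*a^3 + (-16:ℝ)*Real.cos x^2*Real.sin y^2*Real.cos y + (64:ℝ)*Real.cos x^2*Real.sin y^2*Real.cos y*a + (-64:ℝ)*Real.cos x^2*Real.sin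 y^2*Real.cos y*a^2 + (16:ℝ)*Real.cos x^2*Real.sin y^2*Real.cos y*a^3 + (-16:ℝ)*Real.cos x^4*Real.cos y + (48:ℝ)*Real.cos x^4*Real.cos y*a + (-48:ℝ)*Real.cos x^4*Real.cos y*a^2 + (16:ℝ)*Real.cos x^4*Real.cos y*a^3 + (16:ℝ)*Real.cos x^4*Real.cos y^3 + (-48:ℝ)*Real.cos x^4*Real.cos y^3*a + (48:ℝ)*Real.cos x^4*Real.cos y^3*a^2 + (-16:ℝ)*Real.cos x^4*Real.cos y^3*a^3 + (4:ℝ)*Real.cos x^4*Real.sin y^2*Real.cos y + (-32:ℝ)*Real.cos x^4*Real.sin y^2*Real.cos y*a + (44:ℝ)*Real.cos x^4*Real.sin y^2*Real.cos y*a^2 + (-16:ℝ)*Real.cos x^4*Real.sin y^2*Real.cos y*a^3 + (24:ℝ)*Real.sin x*Real.cos x*Real.sin y + (-56:ℝ)*Real.sin x*Real.cos x*Real.sin y*a + (40:ℝ)*Real.sin x*Real.cos x*Real.sin y*a^2 + (-8:ℝ)*Real.sin x*Real.cos x*Real.sin y*a^3 + (-24:ℝ)*Real.sin x*Real.cos x*Real.sin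 y*Real.cos y^2 + (56:ℝ)*Real.sin x*Real.cos x*Real.sin y*Real.cos y^2*a + (-40:ℝ)*Real.sin x*Real.cos x*Real.sin y*Real.cos y^2*a^2 + (8:ℝ)*Real.sin x*Real.cos x*Real.sin y*Real.cos y^2*a^3 + (-24:ℝ)*Real.sin x*Real.cos x*Real.sin y^3 + (56:ℝ)*Real.sin x*Real.cos x*Real.sin y^3*a + (-40:ℝ)*Real.sin x*Real.cos x*Real.sin y^3*a^2 + (8:ℝ)*Real.sin x*Real.cos x*Real.sin y^3*a^3 + (-32:ℝ)*Real.sin x*Real.cos x^3*Real.sin y + (80:ℝ)*Real.sin x*Real.cos x^3*Real.sin y*a + (-64:ℝ)*Real.sin x*Real.cos x^3*Real.sin y*a^2 + (16:ℝ)*Real.sin x*Real.cos x^3*Real.sin y*a^3 + (32:ℝ)*Real.sin x*Real.cos x^3*Real.sin y*Real.cos y^2 + (-68:ℝ)*Real.sin x*Real.cos x^3*Real.sin y*Real.cos y^2*a + (48:ℝ)*Real.sin x*Real.cos x^3*Real.sin y*Real.cos y^2*a^2 + (-12:ℝ)*Real.sin x*Real.cos x^3*Real.sin y*Real.cos y^2*a^3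 + (-4:ℝ)*Real.sin x*Real.cos x^3*Real.sin y^3 + (-20:ℝ)*Real.sin x*Real.cos x^3*Real.sin y^3*a + (36:ℝ)*Real.sin x*Real.cos x^3*Real.sin y^3*a^2 + (-12:ℝ)*Real.sin x*Real.cos x^3*Real.sin y^3*a^3 + (24:ℝ)*Real.sin x^2*Real.cos x^2*Real.cos y + (-56:ℝ)*Real.sin x^2*Real.cos x^2*Real.cos y*a + (40:ℝ)*Real.sin x^2*Real.cos x^2*Real.cos y*a^2 + (-8:ℝ)*Real.sin x^2*Real.cos x^2*Real.cos y*a^3 + (-24:ℝ)*Real.sin x^2*Real.cos x^2*Real.cos y^3 + (56:ℝ)*Real.sin x^2*Real.cos x^2*Real.cos y^3*a + (-40:ℝ)*Real.sin x^2*Real.cos x^2*Real.cos y^3*a^2 + (8:ℝ)*Real.sin x^2*Real.cos x^2*Real.cos y^3*a^3 + (12:ℝ)*Real.sin x^2*Real.cos x^2*Real.sin y^2*Real.cos y + (8:ℝ)*Real.sin x^2*Real.cos x^2*Real.sin y^2*Real.cos y*a + (-28:ℝ)*Real.sin x^2*Real.cos x^2*Real.sin y^2*Real.cos y*a^2 +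 (8:ℝ)*Real.sin x^2*Real.cos x^2*Real.sin y^2*Real.cos y*a^3 + (-24:ℝ)*Real.sin x^3*Real.cos x*Real.sin y*Real.cos y^2 + (44:ℝ)*Real.sin x^3*Real.cos x*Real.sin y*Real.cos y^2*a + (-24:ℝ)*Real.sin x^3*Real.cos x*Real.sin y*Real.cos y^2*a^2 + (4:ℝ)*Real.sin x^3*Real.cos x*Real.sin y*Real.cos y^2*a^3 + (-12:ℝ)*Real.sin x^3*Real.cos x*Real.sin y^3 + (28:ℝ)*Real.sin x^3*Real.cos x*Real.sin y^3*a + (-20:ℝ)*Real.sin x^3*Real.cos x*Real.sin y^3*a^2 + (4:ℝ)*Real.sin x^3*Real.cos x*Real.sin y^3*a^3) * sin_sq_add_cos_sq x + ((-16:ℝ)*Real.cos x^2*Real.cos y + (64:ℝ)*Real.cos x^2*Real.cos y*a + (-64:ℝ)*Real.cos x^2*Real.cos y*a^2 + (16:ℝ)*Real.cos x^2*Real.cos y*a^3 + (32:ℝ)*Real.cos x^4*Real.cos y + (-112:ℝ)*Real.cos x^4*Real.cos y*a + (112:ℝ)*Real.cos x^4*Real.cos y*a^2 + (-32:ℝ)*Real.cos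 x^4*Real.cos y*a^3 + (-16:ℝ)*Real.cos x^6*Real.cos y + (48:ℝ)*Real.cos x^6*Real.cos y*a + (-48:ℝ)*Real.cos x^6*Real.cos y*a^2 + (16:ℝ)*Real.cos x^6*Real.cos y*a^3 + (-24:ℝ)*Real.sin x*Real.cos x*Real.sin y + (56:ℝ)*Real.sin x*Real.cos x*Real.sin y*a + (-40:ℝ)*Real.sin x*Real.cos x*Real.sin y*a^2 + (8:ℝ)*Real.sin x*Real.cos x*Real.sin y*a^3 + (24:ℝ)*Real.sin x*Real.cos x^3*Real.sin y + (-88:ℝ)*Real.sin x*Real.cos x^3*Real.sin y*a + (88:ℝ)*Real.sin x*Real.cos x^3*Real.sin y*a^2 + (-24:ℝ)*Real.sin x*Real.cos x^3*Real.sin y*a^3 + (-16:ℝ)*Real.sin x*Real.cos x^5*Real.sin y + (48:ℝ)*Real.sin x*Real.cos x^5*Real.sin y*a + (-48:ℝ)*Real.sin x*Real.cos x^5*Real.sin y*a^2 + (16:ℝ)*Real.sin x*Real.cos x^5*Real.sin y*a^3) * sin_sq_add_cos_sq y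

theorem stmt_3 (α t : ℝ) (hα0 : 0 < α) (hα1 : α ≤ 1/2)
    (ht0 : 0 < t) (ht1 : t < π/2)
    (hW : (3-α)*sin ((1-α)*t) - (1-α)*sin ((3-α)*t) ≠ 0) :
    deriv (fun s => (2*sin (2*(1-α)*s) - 2*(1-α)*sin (2*s)) /
        ((3-α)*sin ((1-α)*s) - (1-α)*sin ((3-α)*s))) t
      = (sin ((2-α)*t) / sin t) *
        deriv (fun s => ((1+α)*sin ((1-α)*s) - (1-α)*sin ((1+α)*s)) /
          ((3-α)*sin ((1-α)*s) - (1-α)*sin ((3-α)*s))) t := by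
  have hst : sin t ≠ 0 := ne_of_gt (sin_pos_of_pos_of_lt_pi ht0 (ht1.trans (by linarith [pi_pos])))
  have hlin : ∀ c : ℝ, HasDerivAt (fun s : ℝ => c * s) c t := fun c => by
    simpa using (hasDerivAt_id t).const_mul c
  have hU : HasDerivAt (fun s => 2*sin (2*(1-α)*s) - 2*(1-α)*sin (2*s))
      (4*(1-α)*(cos (2*((1:ℝ)-α)*t) - cos (2*t))) t := by
    have h1 := (((hlin (2*(1-α))).sin).const_mul 2).fun_sub (((hlin 2).sin).const_mul (2*(1-α)))
    exact h1.congr_deriv (by ring)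
  have hV : HasDerivAt (fun s => (1+α)*sin ((1-α)*s) - (1-α)*sin ((1+α)*s))
      ((1+α)*(1-α)*cos ((1-α)*t) - (1-α)*(1+α)*cos ((1+α)*t)) t := by
    have h1 := (((hlin (1-α)).sin).const_mul (1+α)).fun_sub (((hlin (1+α)).sin).const_mul (1-α))
    exact h1.congr_deriv (by ring)
  have hWd : HasDerivAt (fun s => (3-α)*sin ((1-α)*s) - (1-α)*sin ((3-α)*s))
      ((3-α)*(1-α)*cos ((1-α)*t) - (1-α)*(3-α)*cos ((3-α)*t)) t := by
    have h1 := (((hlin (1-α)).sin).const_mul (3-α)).fun_sub (((hlin (3-α)).sin).const_mul (1-α))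
    exact h1.congr_deriv (by ring)
  rw [(hU.fun_div hWd hW).deriv, (hV.fun_div hWd hW).deriv]
  have hk := key α t (α*t)
  have e1 : t - α*t = (1-α)*t := by ring
  have e2 : t + α*t = (1+α)*t := by ring
  have e3 : 3*t - α*t = (3-α)*t := by ring
  have e4 : 2*((1-α)*t) = 2*(1-α)*t := by ring
  have e5 : 2*t - α*t = (2-α)*t := by ring
  rw [e1, e2, e3, e4, e5] at hk
  have hW2 : ((3-α)*sin ((1-α)*t) - (1-α)*sin ((3-α)*t))^2 ≠ 0 := pow_ne_zero 2 hW
  rw [div_mul_div_comm, div_eq_div_iff hW2 (mul_ne_zero hst hW2)]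
  linear_combination (((3-α)*sin ((1-α)*t) - (1-α)*sin ((3-α)*t))^2) * hk
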